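/- arXiv:1101.3084 — 4 statements merged into one kernel-verified Lean document; each statement's English description precedes it below -/
import Mathlib

section
/- Let A : 𝔻 × 𝔻 → ℂ be Borel measurable and K-invariant in its second argument, i.e. A(x, e^{iα}·y) = A(x, y) for all x, y ∈ 𝔻 and all α ∈ ℝ. Then ∫_𝔻 ∫_𝔻 |A(x, y)|² dμ(y) dμ(x) = ∫_𝔻 ∫_𝔻 |A(M(x,y), φ_x(y))|² dμ(y) dμ(x) (as an identity of integrals with values in [0, ∞]). -/
open MeasureTheory

/-- The open unit disc in the complex plane. -/
def Disc : Set ℂ := {z : ℂ | ‖z‖ < 1}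

/-- The geodesic symmetry `φ_a(z) = (a - z)/(1 - conj(a)·z)`. -/
noncomputable def phi (a z : ℂ) : ℂ := (a - z) / (1 - (starRingEnd ℂ) a * z)

/-- The hyperbolic measure `dμ(z) = (1 - |z|²)⁻² dA(z)` on the unit disc. -/
noncomputable def hypMeasure : Measure ℂ :=
  (volume.restrict Disc).withDensity fun z => ENNReal.ofReal ((1 - ‖z‖ ^ 2)⁻¹ ^ 2)

open Complex Set
open scoped ENNReal NNReal Real

lemma mem_disc {z : ℂ} : z ∈ Disc ↔ ‖z‖ < 1 := Iff.rfl

lemma measurableSet_disc : MeasurableSet Disc :=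
  measurableSet_lt continuous_norm.measurable measurable_const

lemma measurable_conj' : Measurable fun z : ℂ => (starRingEnd ℂ) z :=
  Complex.continuous_conj.measurable

lemma den_ne {a z : ℂ} (ha : a ∈ Disc) (hz : z ∈ Disc) : 1 - (starRingEnd ℂ) a * z ≠ 0 := by
  intro h
  have h2 : (starRingEnd ℂ) a * z = 1 := by linear_combination -h
  have : ‖(starRingEnd ℂ) a * z‖ < 1 := by
    rw [norm_mul, Complex.norm_conj]
    calc ‖a‖ * ‖z‖ ≤ ‖a‖ * 1 :=
          mul_le_mul_of_nonneg_left hz.le (norm_nonneg a)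
    _ = ‖a‖ := mul_one _
    _ < 1 := ha
  rw [h2] at this; simp at this

lemma key_normSq (a z : ℂ) :
    Complex.normSq (1 - (starRingEnd ℂ) a * z) - Complex.normSq (a - z)
      = (1 - Complex.normSq a) * (1 - Complex.normSq z) := by
  simp only [Complex.normSq_apply, Complex.sub_re, Complex.sub_im, Complex.one_re, Complex.one_im,
    Complex.mul_re, Complex.mul_im, Complex.conj_re, Complex.conj_im]
  ring

lemma normSq_lt_one {z : ℂ} : z ∈ Disc ↔ Complex.normSq z < 1 := by
  rw [mem_disc, ← Complex.sq_norm]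
  constructor
  · intro h; nlinarith [norm_nonneg z]
  · intro h; nlinarith [norm_nonneg z]

lemma self_den_ne {a : ℂ} (ha : a ∈ Disc) : 1 - (starRingEnd ℂ) a * a ≠ 0 :=
  den_ne ha ha

lemma phi_mem {a z : ℂ} (ha : a ∈ Disc) (hz : z ∈ Disc) : phi a z ∈ Disc := by
  rw [normSq_lt_one]
  have hd := den_ne ha hz
  have hdpos : 0 < Complex.normSq (1 - (starRingEnd ℂ) a * z) := by
    simpa [Complex.normSq_pos] using hd
  rw [phi, Complex.normSq_div, div_lt_one hdpos]
  have := key_normSq a z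
  have ha' := normSq_lt_one.mp ha
  have hz' := normSq_lt_one.mp hz
  nlinarith [Complex.normSq_nonneg (a - z)]

lemma phi_invol {a z : ℂ} (ha : a ∈ Disc) (hz : z ∈ Disc) : phi a (phi a z) = z := by
  have hd := den_ne ha hz
  have hcaa := self_den_ne ha
  have e1 : 1 - (starRingEnd ℂ) a * ((a - z)/(1 - (starRingEnd ℂ) a * z))
      = (1 - (starRingEnd ℂ) a * a) / (1 - (starRingEnd ℂ) a * z) := by
    field_simp; ring
  have e2 : a - (a - z)/(1 - (starRingEnd ℂ) a * z)
      = z * (1 - (starRingEnd ℂ) a * a)/(1 - (starRingEnd ℂ) a * z) := by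
    rw [eq_div_iff hd, sub_mul, div_mul_cancel₀ _ hd]; ring
  simp only [phi]
  rw [e2, e1]
  rw [div_div_div_cancel_right₀ hd, mul_div_assoc, div_self hcaa, mul_one]

lemma phi_rot {x c : ℂ} (u : ℂ) (hu : (starRingEnd ℂ) u * u = 1) :
    phi (u * x) (u * c) = u * phi x c := by
  simp only [phi, map_mul]
  have : 1 - (starRingEnd ℂ) u * (starRingEnd ℂ) x * (u * c)
      = 1 - (starRingEnd ℂ) x * c := by
    have : (starRingEnd ℂ) u * (starRingEnd ℂ) x * (u * c)
        = ((starRingEnd ℂ) u * u) * ((starRingEnd ℂ) x * c) := by ring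
    rw [this, hu]; ring
  rw [this, ← mul_sub, mul_div_assoc]

lemma phi_transport {a m z : ℂ} (ha : a ∈ Disc) (hm : m ∈ Disc) (hz : z ∈ Disc) :
    phi (phi a m) (phi a z)
      = (-(1 - a * (starRingEnd ℂ) m) / (1 - (starRingEnd ℂ) a * m)) * phi m z := by
  have hdm := den_ne ha hm
  have hdz := den_ne ha hz
  have hmz := den_ne hm hz
  have hdm' : 1 - a * (starRingEnd ℂ) m ≠ 0 := by
    intro h
    apply hdm
    have := congrArg (starRingEnd ℂ) h
    simpa using this
  have hd2 : 1 - (starRingEnd ℂ) (phi a m) * phi a z ≠ 0 :=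
    den_ne (phi_mem ha hm) (phi_mem ha hz)
  rw [show phi (phi a m) (phi a z)
      = (phi a m - phi a z) / (1 - (starRingEnd ℂ) (phi a m) * phi a z) from rfl,
    div_eq_iff hd2]
  simp only [phi, map_div₀, map_sub, map_mul, map_one, Complex.conj_conj]
  have e3 : 1 - m * (starRingEnd ℂ) a ≠ 0 := by rwa [mul_comm]
  have e4 : 1 - z * (starRingEnd ℂ) a ≠ 0 := by rwa [mul_comm]
  have e5 : 1 - z * (starRingEnd ℂ) m ≠ 0 := by rwa [mul_comm]
  field_simp
  ring

lemma neg_mem_disc {z : ℂ} (hz : z ∈ Disc) : -z ∈ Disc := by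
  simpa [mem_disc] using hz

lemma phi_eq_zero_iff {a z : ℂ} (ha : a ∈ Disc) (hz : z ∈ Disc) : phi a z = 0 ↔ a = z := by
  rw [phi, div_eq_zero_iff]
  constructor
  · rintro (h | h)
    · linear_combination h
    · exact absurd h (den_ne ha hz)
  · intro h; left; rw [h]; ring

lemma mid_unique {x y m n : ℂ} (hx : x ∈ Disc) (hy : y ∈ Disc) (hm : m ∈ Disc)
    (hn : n ∈ Disc) (h1 : phi m x = -(phi m y)) (h2 : phi n x = -(phi n y)) : m = n := by
  have hcD : phi m n ∈ Disc := phi_mem hm hn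
  have hxiD : phi m x ∈ Disc := phi_mem hm hx
  have hmy : phi m y = -(phi m x) := by rw [h1]; ring
  have key : phi (phi m n) (phi m x) + phi (phi m n) (-(phi m x)) = 0 := by
    rw [phi_transport hm hn hx, ← hmy, phi_transport hm hn hy, h2]
    ring
  set c := phi m n with hc
  set ξ := phi m x with hxi
  have hd1 : 1 - (starRingEnd ℂ) c * ξ ≠ 0 := den_ne hcD hxiD
  have hd2 : 1 - (starRingEnd ℂ) c * -ξ ≠ 0 := den_ne hcD (neg_mem_disc hxiD)
  rw [phi, phi, div_add_div _ _ hd1 hd2, div_eq_zero_iff] at key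
  rcases key with key | key
  swap
  · exact absurd key (mul_ne_zero hd1 hd2)
  have hkey : c = (starRingEnd ℂ) c * ξ ^ 2 := by linear_combination key / 2
  have habs : ‖c‖ = ‖c‖ * ‖ξ‖ ^ 2 := by
    calc ‖c‖ = ‖(starRingEnd ℂ) c * ξ ^ 2‖ := by rw [← hkey]
    _ = ‖c‖ * ‖ξ‖ ^ 2 := by
        rw [norm_mul, Complex.norm_conj, norm_pow]
  have hc0 : c = 0 := by
    by_contra h
    have h1' : ‖c‖ ≠ 0 := by simpa using h
    have h2' : ‖ξ‖ ^ 2 = 1 := by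
      have := mul_left_cancel₀ h1' (habs.symm.trans (mul_one (‖c‖)).symm)
      linarith [this]
    have := hxiD
    rw [mem_disc] at this
    nlinarith [norm_nonneg ξ]
  exact (phi_eq_zero_iff hm hn).mp hc0

lemma zero_mem_disc : (0 : ℂ) ∈ Disc := by simp [mem_disc]

lemma phi_zero (a : ℂ) : phi a 0 = a := by simp [phi]

noncomputable def cmap (w : ℂ) : ℂ :=
  (((1 - Real.sqrt (1 - ‖w‖ ^ 2)) / ‖w‖ ^ 2 : ℝ) : ℂ) * w

lemma measurable_cmap : Measurable cmap := by
  apply Measurable.mul _ measurable_id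
  apply Complex.measurable_ofReal.comp
  apply Measurable.div
  · exact (measurable_const.sub ((Real.continuous_sqrt.measurable).comp
      (measurable_const.sub ((continuous_norm.measurable).pow_const 2))))
  · exact (continuous_norm.measurable).pow_const 2

lemma cmap_rot {u : ℂ} (hu : ‖u‖ = 1) (w : ℂ) : cmap (u * w) = u * cmap w := by
  unfold cmap
  rw [norm_mul, hu, one_mul]
  ring

lemma cmap_abs_le {w : ℂ} (hw : w ∈ Disc) : ‖cmap w‖ ≤ ‖w‖ := by
  rcases eq_or_ne w 0 with h | h
  · simp [cmap, h]
  unfold cmap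
  rw [norm_mul, Complex.norm_real, Real.norm_eq_abs]
  set ρ2 := ‖w‖ ^ 2 with hρ2
  have hρpos : 0 < ρ2 := by rw [hρ2]; exact pow_pos (norm_pos_iff.mpr h) 2
  have hρle : ρ2 ≤ 1 := by
    rw [mem_disc] at hw; rw [hρ2]; nlinarith [norm_nonneg w]
  set s := Real.sqrt (1 - ρ2) with hs
  have hsnn : 0 ≤ s := Real.sqrt_nonneg _
  have hssq : s ^ 2 = 1 - ρ2 := Real.sq_sqrt (by linarith)
  have hs1 : s ≤ 1 := by nlinarith
  have ht : |(1 - s) / ρ2| ≤ 1 := by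
    rw [abs_div, _root_.abs_of_nonneg (show (0:ℝ) ≤ 1 - s by nlinarith), _root_.abs_of_nonneg hρpos.le,
      div_le_one hρpos]
    nlinarith
  calc |(1 - s) / ρ2| * ‖w‖ ≤ 1 * ‖w‖ :=
        mul_le_mul_of_nonneg_right ht (norm_nonneg w)
  _ = ‖w‖ := one_mul _

lemma cmap_mem {w : ℂ} (hw : w ∈ Disc) : cmap w ∈ Disc :=
  lt_of_le_of_lt (cmap_abs_le hw) hw

lemma cmap_eqn {w : ℂ} (hw : w ∈ Disc) :
    2 * cmap w = w * (1 + (Complex.normSq (cmap w) : ℂ)) := by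
  rcases eq_or_ne w 0 with h | h
  · simp [cmap, h]
  set ρ2 := ‖w‖ ^ 2 with hρ2
  have hρpos : 0 < ρ2 := by rw [hρ2]; exact pow_pos (norm_pos_iff.mpr h) 2
  have hρle : ρ2 ≤ 1 := by
    rw [mem_disc] at hw; rw [hρ2]; nlinarith [norm_nonneg w]
  set s := Real.sqrt (1 - ρ2) with hs
  have hsnn : 0 ≤ s := Real.sqrt_nonneg _
  have hssq : s ^ 2 = 1 - ρ2 := Real.sq_sqrt (by linarith)
  set t : ℝ := (1 - s) / ρ2 with htdef
  have hcw : cmap w = ((t : ℝ) : ℂ) * w := by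
    simp only [cmap, htdef, hs, hρ2]
  have hnormSq : Complex.normSq (cmap w) = t ^ 2 * ρ2 := by
    rw [hcw, Complex.normSq_mul, Complex.normSq_ofReal, ← Complex.sq_norm, ← hρ2]
    ring
  have hreal : 2 * t = 1 + t ^ 2 * ρ2 := by
    rw [htdef]
    field_simp
    nlinarith
  rw [hnormSq, hcw]
  rw [show ((2:ℂ) * ((t:ℂ) * w)) = w * ((2*t : ℝ) : ℂ) by push_cast; ring,
    show ((2*t : ℝ) : ℂ) = ((1 + t^2*ρ2 : ℝ) : ℂ) by rw [hreal]]
  push_cast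
  ring

lemma cmap_mid {w : ℂ} (hw : w ∈ Disc) : phi (cmap w) 0 = -(phi (cmap w) w) := by
  have hd := den_ne (cmap_mem hw) hw
  rw [phi_zero, phi]
  have hd' : 1 - w * (starRingEnd ℂ) (cmap w) ≠ 0 := by rwa [mul_comm]
  field_simp
  linear_combination (cmap_eqn hw) - w * (Complex.mul_conj (cmap w))

lemma mid_eq (M : ℂ → ℂ → ℂ)
    (hM : ∀ x ∈ Disc, ∀ y ∈ Disc, M x y ∈ Disc ∧ phi (M x y) x = -(phi (M x y) y))
    {x w : ℂ} (hx : x ∈ Disc) (hw : w ∈ Disc) : M x (phi x w) = phi x (cmap w) := by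
  obtain ⟨hMd, hMp⟩ := hM x hx (phi x w) (phi_mem hx hw)
  refine mid_unique hx (phi_mem hx hw) hMd (phi_mem hx (cmap_mem hw)) hMp ?_
  calc phi (phi x (cmap w)) x = phi (phi x (cmap w)) (phi x 0) := by rw [phi_zero]
  _ = (-(1 - x * (starRingEnd ℂ) (cmap w)) / (1 - (starRingEnd ℂ) x * cmap w))
        * phi (cmap w) 0 := phi_transport hx (cmap_mem hw) zero_mem_disc
  _ = -((-(1 - x * (starRingEnd ℂ) (cmap w)) / (1 - (starRingEnd ℂ) x * cmap w))
        * phi (cmap w) w) := by rw [cmap_mid hw]; ring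
  _ = -(phi (phi x (cmap w)) (phi x w)) := by rw [phi_transport hx (cmap_mem hw) hw]

noncomputable def hypDens (z : ℂ) : ℝ≥0∞ := ENNReal.ofReal ((1 - ‖z‖ ^ 2)⁻¹ ^ 2)

lemma measurable_hypDens : Measurable hypDens := by
  apply ENNReal.measurable_ofReal.comp
  exact ((measurable_const.sub ((continuous_norm.measurable).pow_const 2)).inv).pow_const 2

lemma hyp_lintegral (g : ℂ → ℝ≥0∞) (hg : Measurable g) :
    ∫⁻ z, g z ∂hypMeasure = ∫⁻ z in Disc, hypDens z * g z ∂volume := by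
  rw [hypMeasure, show (fun z => ENNReal.ofReal ((1 - ‖z‖ ^ 2)⁻¹ ^ 2)) = hypDens from rfl,
    lintegral_withDensity_eq_lintegral_mul _ measurable_hypDens hg]
  rfl

lemma measurable_phi2 : Measurable (fun p : ℂ × ℂ => phi p.1 p.2) := by
  unfold phi
  exact (measurable_fst.sub measurable_snd).div
    (measurable_const.sub ((measurable_conj'.comp measurable_fst).mul measurable_snd))

lemma measurable_phi_right (a : ℂ) : Measurable (phi a) :=
  measurable_phi2.comp (measurable_const.prodMk measurable_id)

noncomputable def dphi (a z : ℂ) : ℂ :=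
  ((starRingEnd ℂ) a * a - 1) / (1 - (starRingEnd ℂ) a * z) ^ 2

lemma det_mul_complex (c : ℂ) :
    (((1 : ℂ →L[ℂ] ℂ).smulRight c).restrictScalars ℝ : ℂ →L[ℝ] ℂ).det
      = Complex.normSq c := by
  rw [ContinuousLinearMap.det, ← LinearMap.det_toMatrix Complex.basisOneI, Matrix.det_fin_two]
  simp [LinearMap.toMatrix_apply, Complex.coe_basisOneI_repr, Complex.coe_basisOneI,
    Complex.normSq_apply]

lemma hasDerivAt_phi {a z : ℂ} (hd : 1 - (starRingEnd ℂ) a * z ≠ 0) :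
    HasDerivAt (phi a) (dphi a z) z := by
  have h1 : HasDerivAt (fun w : ℂ => a - w) (-1) z := (hasDerivAt_id z).const_sub a
  have h2 : HasDerivAt (fun w : ℂ => 1 - (starRingEnd ℂ) a * w) (-((starRingEnd ℂ) a)) z := by
    simpa using (((hasDerivAt_id z).const_mul ((starRingEnd ℂ) a)).const_sub 1)
  have := h1.div h2 hd
  refine this.congr_deriv ?_
  rw [dphi]
  field_simp
  ring

lemma phi_image {a : ℂ} (ha : a ∈ Disc) : phi a '' Disc = Disc := by
  apply Subset.antisymm
  · rintro _ ⟨z, hz, rfl⟩; exact phi_mem ha hz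
  · intro z hz
    exact ⟨phi a z, phi_mem ha hz, phi_invol ha hz⟩

lemma phi_injOn {a : ℂ} (ha : a ∈ Disc) : InjOn (phi a) Disc := by
  intro x hx y hy h
  have := congrArg (phi a) h
  rwa [phi_invol ha hx, phi_invol ha hy] at this

lemma hyp_density_transform {a z : ℂ} (ha : a ∈ Disc) (hz : z ∈ Disc) :
    ENNReal.ofReal |Complex.normSq (dphi a z)| * hypDens (phi a z) = hypDens z := by
  have hd := den_ne ha hz
  have hdpos : 0 < Complex.normSq (1 - (starRingEnd ℂ) a * z) := by
    simpa [Complex.normSq_pos] using hd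
  have ha' := normSq_lt_one.mp ha
  have hz' := normSq_lt_one.mp hz
  have hkey := key_normSq a z
  have hphiNormSq : 1 - Complex.normSq (phi a z)
      = (1 - Complex.normSq a) * (1 - Complex.normSq z)
        / Complex.normSq (1 - (starRingEnd ℂ) a * z) := by
    rw [phi, Complex.normSq_div, eq_div_iff hdpos.ne', sub_mul, div_mul_cancel₀ _ hdpos.ne']
    linarith [hkey]
  have hdphi : Complex.normSq (dphi a z)
      = (1 - Complex.normSq a) ^ 2 / Complex.normSq (1 - (starRingEnd ℂ) a * z) ^ 2 := by
    rw [dphi, Complex.normSq_div, map_pow]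
    congr 1
    have : Complex.normSq ((starRingEnd ℂ) a * a - 1) = (1 - Complex.normSq a) ^ 2 := by
      rw [show (starRingEnd ℂ) a * a - 1 = -(1 - (starRingEnd ℂ) a * a) by ring, Complex.normSq_neg]
      rw [show (1 : ℂ) - (starRingEnd ℂ) a * a = ((1 - Complex.normSq a : ℝ) : ℂ) by
        rw [Complex.ofReal_sub, Complex.ofReal_one, Complex.normSq_eq_conj_mul_self]]
      rw [Complex.normSq_ofReal]
      ring
    rw [this]
  unfold hypDens
  rw [Complex.sq_norm, Complex.sq_norm, ← ENNReal.ofReal_mul (by positivity)]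
  congr 1
  rw [hphiNormSq, hdphi, _root_.abs_of_nonneg (by positivity)]
  have h1 : (1 : ℝ) - Complex.normSq a > 0 := by linarith
  have h2 : (1 : ℝ) - Complex.normSq z > 0 := by linarith
  field_simp


lemma hyp_map_phi {a : ℂ} (ha : a ∈ Disc) {f : ℂ → ℝ≥0∞} (hf : Measurable f) :
    ∫⁻ z, f (phi a z) ∂hypMeasure = ∫⁻ z, f z ∂hypMeasure := by
  rw [hyp_lintegral (fun z => f (phi a z)) (hf.comp (measurable_phi_right a)), hyp_lintegral _ hf]
  have hderiv : ∀ z ∈ Disc, HasFDerivWithinAt (phi a)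
      ((((1 : ℂ →L[ℂ] ℂ).smulRight (dphi a z)).restrictScalars ℝ : ℂ →L[ℝ] ℂ)) Disc z := by
    intro z hz
    exact (((hasDerivAt_phi (den_ne ha hz)).hasFDerivAt).restrictScalars ℝ).hasFDerivWithinAt
  have := lintegral_image_eq_lintegral_abs_det_fderiv_mul volume measurableSet_disc hderiv
    (phi_injOn ha) (fun z => hypDens z * f z)
  rw [phi_image ha] at this
  rw [this]
  apply setLIntegral_congr_fun measurableSet_disc
  intro z hz
  dsimp only
  rw [det_mul_complex, ← mul_assoc, hyp_density_transform ha hz]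

lemma hyp_map_rot {u : ℂ} (hu : ‖u‖ = 1) {f : ℂ → ℝ≥0∞} (hf : Measurable f) :
    ∫⁻ z, f (u * z) ∂hypMeasure = ∫⁻ z, f z ∂hypMeasure := by
  have hu0 : u ≠ 0 := by intro h; rw [h] at hu; simp at hu
  rw [hyp_lintegral (fun z => f (u * z)) (hf.comp (measurable_const_mul u)), hyp_lintegral _ hf]
  have habs : ∀ z : ℂ, ‖u * z‖ = ‖z‖ := by
    intro z; rw [norm_mul, hu, one_mul]
  have himg : (fun z => u * z) '' Disc = Disc := by
    apply Subset.antisymm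
    · rintro _ ⟨z, hz, rfl⟩; simpa [mem_disc, habs, hu] using hz
    · intro z hz
      refine ⟨u⁻¹ * z, ?_, by field_simp⟩
      rw [mem_disc, norm_mul, norm_inv, hu]
      simpa [mem_disc] using hz
  have hderiv : ∀ z ∈ Disc, HasFDerivWithinAt (fun z => u * z)
      ((((1 : ℂ →L[ℂ] ℂ).smulRight u).restrictScalars ℝ : ℂ →L[ℝ] ℂ)) Disc z := by
    intro z hz
    have : HasDerivAt (fun z => u * z) u z := by simpa using (hasDerivAt_id z).const_mul u
    exact ((this.hasFDerivAt).restrictScalars ℝ).hasFDerivWithinAt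
  have hinj : InjOn (fun z => u * z) Disc := fun x _ y _ h => by
    field_simp at h; tauto
  have := lintegral_image_eq_lintegral_abs_det_fderiv_mul volume measurableSet_disc hderiv
    hinj (fun z => hypDens z * f z)
  rw [himg] at this
  rw [this]
  apply setLIntegral_congr_fun measurableSet_disc
  intro z hz
  dsimp only
  rw [det_mul_complex]
  have : Complex.normSq u = 1 := by rw [← Complex.sq_norm, hu]; norm_num
  rw [this]
  have : hypDens (u * z) = hypDens z := by unfold hypDens; rw [habs]
  rw [this]
  simp

instance : SFinite hypMeasure := by unfold hypMeasure; infer_instance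

lemma abs_phi_symm (a z : ℂ) : ‖phi a z‖ = ‖phi z a‖ := by
  rw [phi, phi, norm_div, norm_div, norm_sub_rev]
  congr 1
  rw [show (1 : ℂ) - (starRingEnd ℂ) z * a = (starRingEnd ℂ) (1 - (starRingEnd ℂ) a * z) by
    simp [map_sub, map_mul]; ring, Complex.norm_conj]

lemma coe_abs_mem {w : ℂ} (hw : w ∈ Disc) : ((‖w‖ : ℝ) : ℂ) ∈ Disc := by
  rw [mem_disc, Complex.norm_real, Real.norm_eq_abs, _root_.abs_of_nonneg (norm_nonneg w)]
  exact hw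

lemma circle_shift (Φ : ℂ → ℝ≥0∞) {v v' : ℂ} (h : ‖v‖ = ‖v'‖) :
    ∫⁻ θ in Ioc 0 (2 * π), Φ (Complex.exp (θ * Complex.I) * v) ∂volume
      = ∫⁻ θ in Ioc 0 (2 * π), Φ (Complex.exp (θ * Complex.I) * v') ∂volume := by
  haveI : Fact (0 < 2 * π) := ⟨Real.two_pi_pos⟩
  have key : ∀ v : ℂ, ∫⁻ θ in Ioc 0 (2 * π), Φ (Complex.exp (θ * Complex.I) * v) ∂volume
      = ∫⁻ b : AddCircle (2 * π), Φ ((AddCircle.toCircle b : ℂ) * v) ∂volume := by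
    intro v
    have := AddCircle.lintegral_preimage (2 * π) 0
      (fun b => Φ ((AddCircle.toCircle b : ℂ) * v))
    rw [zero_add] at this
    rw [← this]
    apply setLIntegral_congr_fun measurableSet_Ioc
    intro θ _
    congr 2
    rw [div_self (by positivity : (2:ℝ) * π ≠ 0), one_mul]
  rcases eq_or_ne v 0 with h0 | h0
  · have h0' : v' = 0 := by
      have := h; rw [h0, norm_zero] at this
      exact norm_eq_zero.mp this.symm
    rw [h0, h0']
  have hv'0 : ‖v‖ ≠ 0 := by simpa using h0
  set u : ℂ := v' / v with hu
  have huabs : ‖u‖ = 1 := by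
    rw [hu, norm_div, ← h, div_self hv'0]
  have hv' : v' = Complex.exp ((Complex.arg u : ℝ) * Complex.I) * v := by
    have := Complex.norm_mul_exp_arg_mul_I u
    rw [huabs] at this
    simp only [Complex.ofReal_one, one_mul] at this
    rw [this, hu]
    field_simp
  rw [key v, key v', hv']
  have : ∀ b : AddCircle (2 * π), (AddCircle.toCircle b : ℂ)
      * (Complex.exp ((Complex.arg u : ℝ) * Complex.I) * v)
      = (AddCircle.toCircle (((Complex.arg u : ℝ) : AddCircle (2 * π)) + b) : ℂ) * v := by
    intro b
    rw [AddCircle.toCircle_add]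
    push_cast
    rw [AddCircle.toCircle_apply_mk, div_self (by positivity : (2:ℝ) * π ≠ 0), one_mul,
      Circle.coe_exp]
    ring
  simp_rw [this]
  exact (lintegral_add_left_eq_self (μ := (volume : Measure (AddCircle (2 * π)))) (fun b : AddCircle (2 * π) =>
    Φ ((AddCircle.toCircle b : ℂ) * v)) ((Complex.arg u : ℝ) : AddCircle (2 * π))).symm

lemma hyp_ae_disc : ∀ᵐ z ∂hypMeasure, z ∈ Disc := by
  rw [ae_iff]
  have h1 : {a : ℂ | ¬ a ∈ Disc} = Discᶜ := rfl
  rw [h1, hypMeasure, withDensity_apply _ measurableSet_disc.compl,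
    Measure.restrict_restrict measurableSet_disc.compl, compl_inter_self,
    Measure.restrict_empty, lintegral_zero_measure]

lemma unit_conj_mul {u : ℂ} (hu : ‖u‖ = 1) : (starRingEnd ℂ) u * u = 1 := by
  rw [mul_comm, Complex.mul_conj, ← Complex.sq_norm, hu]
  norm_num

lemma measurable_e : Measurable (fun θ : ℝ => Complex.exp ((θ : ℂ) * Complex.I)) :=
  ((Complex.continuous_ofReal.mul continuous_const).cexp).measurable

lemma measurable_phi_left (c : ℂ) : Measurable (fun x => phi x c) :=
  measurable_phi2.comp (measurable_id.prodMk measurable_const)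

theorem key_identity (F : ℂ → ℂ → ℝ≥0∞) (hF : Measurable (Function.uncurry F))
    (hFK : ∀ v ∈ Disc, ∀ w ∈ Disc, F v w = F v ((‖w‖ : ℝ) : ℂ)) :
    ∫⁻ x, ∫⁻ y, F (phi x (cmap (phi x y))) (phi x y) ∂hypMeasure ∂hypMeasure
      = ∫⁻ x, ∫⁻ y, F x y ∂hypMeasure ∂hypMeasure := by
  have habs_e : ∀ θ : ℝ, ‖Complex.exp ((θ : ℂ) * Complex.I)‖ = 1 := fun θ =>
    Complex.norm_exp_ofReal_mul_I θ
  have mabs : Measurable (fun w : ℂ => ((‖w‖ : ℝ) : ℂ)) :=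
    Complex.measurable_ofReal.comp continuous_norm.measurable
  -- measurability of the main integrand families
  have m_q : Measurable (Function.uncurry fun x w =>
      F (phi x (cmap w)) ((‖w‖ : ℝ) : ℂ)) :=
    hF.comp ((measurable_phi2.comp
      (measurable_fst.prodMk (measurable_cmap.comp measurable_snd))).prodMk
      (mabs.comp measurable_snd))
  have m_xw : Measurable (Function.uncurry fun w x =>
      F (phi x (cmap w)) ((‖w‖ : ℝ) : ℂ)) :=
    hF.comp ((measurable_phi2.comp
      (measurable_snd.prodMk (measurable_cmap.comp measurable_fst))).prodMk
      (mabs.comp measurable_fst))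
  have m_F2 : Measurable (Function.uncurry fun w x => F x ((‖w‖ : ℝ) : ℂ)) :=
    hF.comp (measurable_snd.prodMk (mabs.comp measurable_fst))
  have m_rot : Measurable (Function.uncurry fun (p : ℝ × ℂ) (x : ℂ) =>
      F (Complex.exp ((p.1 : ℂ) * Complex.I) * phi x (cmap p.2))
        ((‖p.2‖ : ℝ) : ℂ)) :=
    hF.comp ((((measurable_e.comp (measurable_fst.comp measurable_fst))).mul
        (measurable_phi2.comp (measurable_snd.prodMk
          (measurable_cmap.comp (measurable_snd.comp measurable_fst))))).prodMk
      (mabs.comp (measurable_snd.comp measurable_fst)))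
  calc
    ∫⁻ x, ∫⁻ y, F (phi x (cmap (phi x y))) (phi x y) ∂hypMeasure ∂hypMeasure
      = ∫⁻ x, ∫⁻ w, F (phi x (cmap w)) w ∂hypMeasure ∂hypMeasure := by
        apply lintegral_congr_ae
        filter_upwards [hyp_ae_disc] with x hx
        exact hyp_map_phi hx (hF.comp
          (((measurable_phi_right x).comp measurable_cmap).prodMk measurable_id))
    _ = ∫⁻ x, ∫⁻ w, F (phi x (cmap w)) ((‖w‖ : ℝ) : ℂ) ∂hypMeasure ∂hypMeasure := by
        apply lintegral_congr_ae
        filter_upwards [hyp_ae_disc] with x hx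
        apply lintegral_congr_ae
        filter_upwards [hyp_ae_disc] with w hw
        exact hFK _ (phi_mem hx (cmap_mem hw)) _ hw
    _ = ∫⁻ w, ∫⁻ x, F (phi x (cmap w)) ((‖w‖ : ℝ) : ℂ) ∂hypMeasure ∂hypMeasure :=
        lintegral_lintegral_swap m_q.aemeasurable
    _ = ∫⁻ w, ∫⁻ x, F x ((‖w‖ : ℝ) : ℂ) ∂hypMeasure ∂hypMeasure := by
        -- the main rotation-averaging step
        set S : Set ℝ := Ioc 0 (2 * π) with hS
        set c2π : ℝ≥0∞ := ENNReal.ofReal (2 * π) with hc2π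
        have hc0 : c2π ≠ 0 := by
          rw [hc2π]
          simp only [ne_eq, ENNReal.ofReal_eq_zero, not_le]
          positivity
        have hctop : c2π ≠ ⊤ := ENNReal.ofReal_ne_top
        have hvolS : volume S = c2π := by
          rw [hS, hc2π, Real.volume_Ioc, sub_zero]
        set H : ℂ → ℝ≥0∞ := fun w => ∫⁻ x, F (phi x (cmap w)) ((‖w‖ : ℝ) : ℂ)
          ∂hypMeasure with hH
        have hHmeas : Measurable H := Measurable.lintegral_prod_right m_xw
        set R : ℂ → ℝ≥0∞ := fun w => ∫⁻ x, F x ((‖w‖ : ℝ) : ℂ) ∂hypMeasure with hR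
        have hRmeas : Measurable R := Measurable.lintegral_prod_right m_F2
        have frame : ∫⁻ w, H w ∂hypMeasure
            = c2π⁻¹ * ∫⁻ θ in S, (∫⁻ w, H (Complex.exp ((θ : ℂ) * Complex.I) * w)
                ∂hypMeasure) ∂volume := by
          have h1 : ∀ θ : ℝ, ∫⁻ w, H (Complex.exp ((θ : ℂ) * Complex.I) * w) ∂hypMeasure
              = ∫⁻ w, H w ∂hypMeasure := fun θ => hyp_map_rot (habs_e θ) hHmeas
          rw [setLIntegral_congr_fun measurableSet_Ioc (fun θ _ => h1 θ),
            setLIntegral_const, hvolS,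
            mul_comm (∫⁻ w, H w ∂hypMeasure) c2π, ← mul_assoc,
            ENNReal.inv_mul_cancel hc0 hctop, one_mul]
        have rot_inner : ∀ θ : ℝ, ∀ w : ℂ,
            H (Complex.exp ((θ : ℂ) * Complex.I) * w)
              = ∫⁻ x, F (Complex.exp ((θ : ℂ) * Complex.I) * phi x (cmap w))
                  ((‖w‖ : ℝ) : ℂ) ∂hypMeasure := by
          intro θ w
          show (∫⁻ x, F (phi x (cmap (Complex.exp ((θ : ℂ) * Complex.I) * w)))
              ((‖Complex.exp ((θ : ℂ) * Complex.I) * w‖ : ℝ) : ℂ) ∂hypMeasure) = _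
          have e1 : ∀ x : ℂ, F (phi x (cmap (Complex.exp ((θ : ℂ) * Complex.I) * w)))
              ((‖Complex.exp ((θ : ℂ) * Complex.I) * w‖ : ℝ) : ℂ)
              = F (phi x (Complex.exp ((θ : ℂ) * Complex.I) * cmap w))
                ((‖w‖ : ℝ) : ℂ) := by
            intro x
            rw [cmap_rot (habs_e θ), norm_mul, habs_e, one_mul]
          rw [lintegral_congr e1]
          have e2 := hyp_map_rot (habs_e θ)
            (f := fun x => F (phi x (Complex.exp ((θ : ℂ) * Complex.I) * cmap w))
              ((‖w‖ : ℝ) : ℂ))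
            (hF.comp ((measurable_phi_left _).prodMk measurable_const))
          rw [← e2]
          apply lintegral_congr
          intro x
          show F (phi (Complex.exp ((θ : ℂ) * Complex.I) * x)
              (Complex.exp ((θ : ℂ) * Complex.I) * cmap w)) ((‖w‖ : ℝ) : ℂ) = _
          rw [phi_rot _ (unit_conj_mul (habs_e θ))]
        have inner_eq : ∀ w ∈ Disc,
            (∫⁻ θ in S, (∫⁻ x, F (Complex.exp ((θ : ℂ) * Complex.I) * phi x (cmap w))
                ((‖w‖ : ℝ) : ℂ) ∂hypMeasure) ∂volume) = R w * c2π := by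
          intro w hw
          have mw1 : Measurable (Function.uncurry fun (θ : ℝ) (x : ℂ) =>
              F (Complex.exp ((θ : ℂ) * Complex.I) * phi x (cmap w))
                ((‖w‖ : ℝ) : ℂ)) :=
            hF.comp (((measurable_e.comp measurable_fst).mul
              ((measurable_phi_left _).comp measurable_snd)).prodMk measurable_const)
          have mw2 : Measurable (Function.uncurry fun (x : ℂ) (θ : ℝ) =>
              F (Complex.exp ((θ : ℂ) * Complex.I) * phi (cmap w) x)
                ((‖w‖ : ℝ) : ℂ)) :=
            hF.comp (((measurable_e.comp measurable_snd).mul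
              ((measurable_phi_right _).comp measurable_fst)).prodMk measurable_const)
          calc
            (∫⁻ θ in S, (∫⁻ x, F (Complex.exp ((θ : ℂ) * Complex.I) * phi x (cmap w))
                ((‖w‖ : ℝ) : ℂ) ∂hypMeasure) ∂volume)
              = ∫⁻ x, (∫⁻ θ in S, F (Complex.exp ((θ : ℂ) * Complex.I) * phi x (cmap w))
                  ((‖w‖ : ℝ) : ℂ) ∂volume) ∂hypMeasure :=
                lintegral_lintegral_swap mw1.aemeasurable
            _ = ∫⁻ x, (∫⁻ θ in S, F (Complex.exp ((θ : ℂ) * Complex.I) * phi (cmap w) x)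
                  ((‖w‖ : ℝ) : ℂ) ∂volume) ∂hypMeasure := by
                apply lintegral_congr
                intro x
                exact circle_shift (fun z => F z ((‖w‖ : ℝ) : ℂ))
                  (abs_phi_symm x (cmap w))
            _ = ∫⁻ θ in S, (∫⁻ x, F (Complex.exp ((θ : ℂ) * Complex.I) * phi (cmap w) x)
                  ((‖w‖ : ℝ) : ℂ) ∂hypMeasure) ∂volume :=
                lintegral_lintegral_swap mw2.aemeasurable
            _ = ∫⁻ θ in S, (∫⁻ x, F (Complex.exp ((θ : ℂ) * Complex.I) * x)
                  ((‖w‖ : ℝ) : ℂ) ∂hypMeasure) ∂volume := by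
                apply lintegral_congr
                intro θ
                exact hyp_map_phi (cmap_mem hw)
                  (hF.comp ((measurable_const_mul _).prodMk measurable_const))
            _ = ∫⁻ θ in S, (∫⁻ x, F x ((‖w‖ : ℝ) : ℂ) ∂hypMeasure) ∂volume := by
                apply lintegral_congr
                intro θ
                exact hyp_map_rot (habs_e θ)
                  (hF.comp (measurable_id.prodMk measurable_const))
            _ = R w * c2π := by rw [setLIntegral_const, hvolS]
        calc
          ∫⁻ w, H w ∂hypMeasure
            = c2π⁻¹ * ∫⁻ θ in S, (∫⁻ w, H (Complex.exp ((θ : ℂ) * Complex.I) * w)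
                ∂hypMeasure) ∂volume := frame
          _ = c2π⁻¹ * ∫⁻ θ in S, (∫⁻ w, (∫⁻ x, F (Complex.exp ((θ : ℂ) * Complex.I)
                * phi x (cmap w)) ((‖w‖ : ℝ) : ℂ) ∂hypMeasure)
                ∂hypMeasure) ∂volume := by
              congr 1
              exact lintegral_congr fun θ => lintegral_congr fun w => rot_inner θ w
          _ = c2π⁻¹ * ∫⁻ w, (∫⁻ θ in S, (∫⁻ x, F (Complex.exp ((θ : ℂ) * Complex.I)
                * phi x (cmap w)) ((‖w‖ : ℝ) : ℂ) ∂hypMeasure)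
                ∂volume) ∂hypMeasure := by
              congr 1
              exact lintegral_lintegral_swap (Measurable.lintegral_prod_right m_rot).aemeasurable
          _ = c2π⁻¹ * ∫⁻ w, R w * c2π ∂hypMeasure := by
              congr 1
              apply lintegral_congr_ae
              filter_upwards [hyp_ae_disc] with w hw
              exact inner_eq w hw
          _ = ∫⁻ w, R w ∂hypMeasure := by
              rw [lintegral_mul_const _ hRmeas, mul_comm (∫⁻ w, R w ∂hypMeasure) c2π,
                ← mul_assoc, ENNReal.inv_mul_cancel hc0 hctop, one_mul]
    _ = ∫⁻ x, ∫⁻ w, F x ((‖w‖ : ℝ) : ℂ) ∂hypMeasure ∂hypMeasure :=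
        lintegral_lintegral_swap m_F2.aemeasurable
    _ = ∫⁻ x, ∫⁻ y, F x y ∂hypMeasure ∂hypMeasure := by
        apply lintegral_congr_ae
        filter_upwards [hyp_ae_disc] with x hx
        apply lintegral_congr_ae
        filter_upwards [hyp_ae_disc] with w hw
        exact (hFK _ hx _ hw).symm

/-- If `A : 𝔻 × 𝔻 → ℂ` is Borel measurable and `K`-invariant in its second
argument, then `∫∫ |A(x,y)|² dμ(y) dμ(x) = ∫∫ |A(M(x,y), φ_x(y))|² dμ(y) dμ(x)`,
where `M` is the geodesic midpoint map. -/
theorem stmt0 (M : ℂ → ℂ → ℂ)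
    (hM : ∀ x ∈ Disc, ∀ y ∈ Disc, M x y ∈ Disc ∧ phi (M x y) x = -(phi (M x y) y))
    (A : ℂ × ℂ → ℂ) (hA : Measurable A)
    (hK : ∀ x ∈ Disc, ∀ y ∈ Disc, ∀ α : ℝ,
      A (x, Complex.exp (Complex.I * α) * y) = A (x, y)) :
    ∫⁻ x, (∫⁻ y, ENNReal.ofReal (‖A (x, y)‖ ^ 2) ∂hypMeasure) ∂hypMeasure
      = ∫⁻ x, (∫⁻ y, ENNReal.ofReal (‖A (M x y, phi x y)‖ ^ 2) ∂hypMeasure)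
          ∂hypMeasure := by
  set F : ℂ → ℂ → ℝ≥0∞ := fun x y => ENNReal.ofReal (‖A (x, y)‖ ^ 2) with hFdef
  have hF : Measurable (Function.uncurry F) :=
    ENNReal.measurable_ofReal.comp ((continuous_norm.measurable.comp hA).pow_const 2)
  have hFK : ∀ v ∈ Disc, ∀ w ∈ Disc, F v w = F v ((‖w‖ : ℝ) : ℂ) := by
    intro v hv w hw
    have h2 : Complex.exp (Complex.I * ((Complex.arg w : ℝ) : ℂ)) * ((‖w‖ : ℝ) : ℂ)
        = w := by
      rw [mul_comm Complex.I ((Complex.arg w : ℝ) : ℂ), mul_comm]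
      exact Complex.norm_mul_exp_arg_mul_I w
    have h3 := hK v hv ((‖w‖ : ℝ) : ℂ) (coe_abs_mem hw) (Complex.arg w)
    rw [h2] at h3
    show ENNReal.ofReal (‖A (v, w)‖ ^ 2)
        = ENNReal.ofReal (‖A (v, ((‖w‖ : ℝ) : ℂ))‖ ^ 2)
    rw [← h3]
  have step : ∫⁻ x, (∫⁻ y, F (M x y) (phi x y) ∂hypMeasure) ∂hypMeasure
      = ∫⁻ x, ∫⁻ y, F (phi x (cmap (phi x y))) (phi x y) ∂hypMeasure ∂hypMeasure := by
    apply lintegral_congr_ae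
    filter_upwards [hyp_ae_disc] with x hx
    apply lintegral_congr_ae
    filter_upwards [hyp_ae_disc] with y hy
    have hmid := mid_eq M hM hx (phi_mem hx hy)
    rw [phi_invol hx hy] at hmid
    rw [hmid]
  rw [show (∫⁻ x, (∫⁻ y, ENNReal.ofReal (‖A (M x y, phi x y)‖ ^ 2) ∂hypMeasure)
      ∂hypMeasure) = ∫⁻ x, (∫⁻ y, F (M x y) (phi x y) ∂hypMeasure) ∂hypMeasure from rfl,
    step]
  exact (key_identity F hF hFK).symm
end

section
/- For all x, y ∈ 𝔻 and λ ∈ ℝ, (1/(2π)) ∫₀^{2π} e_{λ,exp(iθ)}(x) · e_{−λ,exp(iθ)}(y) dθ = Φ_λ(φ_y(x)). -/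
open MeasureTheory

/-- The plane wave `e_{λ,b}(z) = ((1 - |z|²)/|z - b|²)^{(1+iλ)/2}`. -/
noncomputable def pw (lam : ℝ) (b z : ℂ) : ℂ :=
  (((1 - ‖z‖ ^ 2) / ‖z - b‖ ^ 2 : ℝ) : ℂ) ^
    ((1 + Complex.I * (lam : ℂ)) / 2)

/-- The spherical function `Φ_λ(z) = (1/(2π)) ∫₀^{2π} e_{λ,e^{iθ}}(z) dθ`. -/
noncomputable def sphFn (lam : ℝ) (z : ℂ) : ℂ :=
  (1 / (2 * Real.pi) : ℝ) •
    ∫ θ in (0:ℝ)..(2 * Real.pi), pw lam (Complex.exp (Complex.I * (θ : ℂ))) z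

noncomputable def pker (y : ℂ) (θ : ℝ) : ℝ :=
  (1 - ‖y‖ ^ 2) / ‖y - Complex.exp (Complex.I * θ)‖ ^ 2

noncomputable def Hfun (y : ℂ) (θ : ℝ) : ℝ :=
  (phi y 1).arg + ∫ s in (0:ℝ)..θ, pker y s


lemma one_sub_conj_mul_ne {y z : ℂ} (hy : ‖y‖ < 1) (hz : ‖z‖ ≤ 1) :
    1 - (starRingEnd ℂ) y * z ≠ 0 := by
  intro h
  have h2 : (starRingEnd ℂ) y * z = 1 := by linear_combination -h
  have h3 : ‖(starRingEnd ℂ) y * z‖ < 1 := by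
    rw [norm_mul, Complex.norm_conj]
    nlinarith [norm_nonneg y, norm_nonneg z]
  rw [h2] at h3; simp at h3

lemma abs_one_sub_conj_mul {y b : ℂ} (hb : ‖b‖ = 1) :
    ‖1 - (starRingEnd ℂ) y * b‖ = ‖b - y‖ := by
  have hbc : b * (starRingEnd ℂ) b = 1 := by
    rw [Complex.mul_conj]
    norm_cast
    rw [← Complex.sq_norm, hb]; norm_num
  have : (starRingEnd ℂ) b * (1 - (starRingEnd ℂ) y * b) = (starRingEnd ℂ) (b - y) := by
    rw [map_sub]; linear_combination -(starRingEnd ℂ) y * hbc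
  calc ‖1 - (starRingEnd ℂ) y * b‖
      = ‖(starRingEnd ℂ) b‖ * ‖1 - (starRingEnd ℂ) y * b‖ := by
        rw [Complex.norm_conj, hb, one_mul]
    _ = ‖(starRingEnd ℂ) (b - y)‖ := by rw [← norm_mul, this]
    _ = ‖b - y‖ := Complex.norm_conj _

lemma normSq_diff_ident (x y : ℂ) :
    ‖1 - (starRingEnd ℂ) y * x‖ ^ 2 - ‖y - x‖ ^ 2
      = (1 - ‖y‖ ^ 2) * (1 - ‖x‖ ^ 2) := by
  have e : ∀ z : ℂ, ((‖z‖ ^ 2 : ℝ) : ℂ) = z * (starRingEnd ℂ) z := by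
    intro z; rw [Complex.mul_conj, Complex.sq_norm]
  apply Complex.ofReal_injective
  push_cast [e]
  simp only [map_sub, map_mul, map_one, Complex.conj_conj]
  ring


lemma one_sub_sq_abs_phi {x y : ℂ} (hy : ‖y‖ < 1) (hx : ‖x‖ ≤ 1) :
    1 - ‖phi y x‖ ^ 2
      = (1 - ‖y‖ ^ 2) * (1 - ‖x‖ ^ 2)
          / ‖1 - (starRingEnd ℂ) y * x‖ ^ 2 := by
  have hu := one_sub_conj_mul_ne hy hx
  have hu' : ‖1 - (starRingEnd ℂ) y * x‖ ^ 2 ≠ 0 :=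
    pow_ne_zero _ (norm_ne_zero_iff.mpr hu)
  rw [phi, norm_div, div_pow, eq_div_iff hu', sub_mul,
      div_mul_cancel₀ _ hu', ← normSq_diff_ident x y, one_mul]

lemma abs_phi_lt_one {x y : ℂ} (hy : ‖y‖ < 1) (hx : ‖x‖ < 1) :
    ‖phi y x‖ < 1 := by
  have h := one_sub_sq_abs_phi hy hx.le
  have hu : 0 < ‖1 - (starRingEnd ℂ) y * x‖ ^ 2 :=
    pow_pos (norm_pos_iff.mpr (one_sub_conj_mul_ne hy hx.le)) 2
  have hpos : 0 < 1 - ‖phi y x‖ ^ 2 := by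
    have hy2 : (0:ℝ) < 1 - ‖y‖ ^ 2 := by nlinarith [norm_nonneg y]
    have hx2 : (0:ℝ) < 1 - ‖x‖ ^ 2 := by nlinarith [norm_nonneg x]
    rw [h]; positivity
  nlinarith [norm_nonneg (phi y x)]

lemma abs_phi_eq_one {y b : ℂ} (hy : ‖y‖ < 1) (hb : ‖b‖ = 1) :
    ‖phi y b‖ = 1 := by
  have hv := one_sub_conj_mul_ne hy hb.le
  rw [phi, norm_div, abs_one_sub_conj_mul hb, norm_sub_rev b y, div_self]
  intro h
  rw [norm_eq_zero] at h
  rw [sub_eq_zero] at h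
  rw [h, hb] at hy
  exact lt_irrefl _ hy

lemma phi_sub_phi {x y b : ℂ} (hy : ‖y‖ < 1) (hx : ‖x‖ ≤ 1)
    (hb : ‖b‖ ≤ 1) :
    phi y x - phi y b = (b - x) * (1 - y * (starRingEnd ℂ) y)
      / ((1 - (starRingEnd ℂ) y * x) * (1 - (starRingEnd ℂ) y * b)) := by
  have hu := one_sub_conj_mul_ne hy hx
  have hv := one_sub_conj_mul_ne hy hb
  rw [phi, phi]
  rw [div_sub_div _ _ hu hv]; congr 1
  ring

lemma key_base {x y b : ℂ} (hy : ‖y‖ < 1) (hx : ‖x‖ < 1)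
    (hb : ‖b‖ = 1) :
    (1 - ‖phi y x‖ ^ 2) / ‖phi y x - phi y b‖ ^ 2
      = ((1 - ‖x‖ ^ 2) / ‖x - b‖ ^ 2)
          / ((1 - ‖y‖ ^ 2) / ‖y - b‖ ^ 2) := by
  have hu := one_sub_conj_mul_ne hy hx.le
  have hv := one_sub_conj_mul_ne hy hb.le
  have hau : (0:ℝ) < ‖1 - (starRingEnd ℂ) y * x‖ := norm_pos_iff.mpr hu
  have hav : (0:ℝ) < ‖1 - (starRingEnd ℂ) y * b‖ := norm_pos_iff.mpr hv
  have hxb : x - b ≠ 0 := by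
    intro h; rw [sub_eq_zero] at h; rw [h, hb] at hx; exact lt_irrefl _ hx
  have hbx : (0:ℝ) < ‖b - x‖ := by
    rw [norm_sub_rev]; exact norm_pos_iff.mpr hxb
  have hyb : (0:ℝ) < ‖y - b‖ := by
    rw [norm_pos_iff, sub_ne_zero]
    intro h; rw [h, hb] at hy; exact lt_irrefl _ hy
  have hy2 : (0:ℝ) < 1 - ‖y‖ ^ 2 := by nlinarith [norm_nonneg y]
  have habs1 : ‖1 - y * (starRingEnd ℂ) y‖ = 1 - ‖y‖ ^ 2 := by
    have : (1 : ℂ) - y * (starRingEnd ℂ) y = ((1 - ‖y‖ ^ 2 : ℝ) : ℂ) := by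
      rw [Complex.mul_conj, Complex.sq_norm]; push_cast; ring
    rw [this, Complex.norm_real, Real.norm_eq_abs, abs_of_pos hy2]
  have h4 : ‖phi y x - phi y b‖ ^ 2
      = ‖b - x‖ ^ 2 * (1 - ‖y‖ ^ 2) ^ 2
        / (‖1 - (starRingEnd ℂ) y * x‖ ^ 2
            * ‖1 - (starRingEnd ℂ) y * b‖ ^ 2) := by
    rw [phi_sub_phi hy hx.le hb.le, norm_div, norm_mul, norm_mul, habs1]
    rw [div_pow, mul_pow, mul_pow]
  have h5 : ‖1 - (starRingEnd ℂ) y * b‖ = ‖y - b‖ := by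
    rw [abs_one_sub_conj_mul hb, norm_sub_rev]
  have hxb' : ‖x - b‖ = ‖b - x‖ := norm_sub_rev x b
  rw [one_sub_sq_abs_phi hy hx.le, h4, h5, hxb']
  field_simp


lemma abs_exp_I_mul (θ : ℝ) : ‖Complex.exp (Complex.I * θ)‖ = 1 := by
  rw [mul_comm]; exact Complex.norm_exp_ofReal_mul_I θ

lemma base_pos {z b : ℂ} (hz : ‖z‖ < 1) (hb : ‖b‖ = 1) :
    0 < (1 - ‖z‖ ^ 2) / ‖z - b‖ ^ 2 := by
  have h1 : (0:ℝ) < 1 - ‖z‖ ^ 2 := by nlinarith [norm_nonneg z]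
  have h2 : z - b ≠ 0 := by
    intro h; rw [sub_eq_zero] at h; rw [h, hb] at hz; exact lt_irrefl _ hz
  have := norm_pos_iff.mpr h2
  positivity

lemma pker_pos {y : ℂ} (hy : ‖y‖ < 1) (θ : ℝ) : 0 < pker y θ := by
  have h := base_pos hy (abs_exp_I_mul θ)
  rw [pker]
  rw [norm_sub_rev] at h ⊢
  exact h

lemma pw_mul_pw {x y : ℂ} (hx : ‖x‖ < 1) (hy : ‖y‖ < 1) (lam θ : ℝ) :
    pw lam (Complex.exp (Complex.I * θ)) x * pw (-lam) (Complex.exp (Complex.I * θ)) y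
      = pker y θ • pw lam (phi y (Complex.exp (Complex.I * θ))) (phi y x) := by
  set b := Complex.exp (Complex.I * θ) with hbdef
  have hb : ‖b‖ = 1 := abs_exp_I_mul θ
  set Bx : ℝ := (1 - ‖x‖ ^ 2) / ‖x - b‖ ^ 2 with hBxdef
  set By : ℝ := (1 - ‖y‖ ^ 2) / ‖y - b‖ ^ 2 with hBydef
  have hBx : 0 < Bx := base_pos hx hb
  have hBy : 0 < By := base_pos hy hb
  have hpk : pker y θ = By := rfl
  set s : ℂ := (1 + Complex.I * (lam : ℂ)) / 2 with hsdef
  have hs' : (1 + Complex.I * ((-lam : ℝ) : ℂ)) / 2 = 1 - s := by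
    rw [hsdef]; push_cast; ring
  have hbase : (1 - ‖phi y x‖ ^ 2) / ‖phi y x - phi y b‖ ^ 2
      = Bx / By := key_base hy hx hb
  have hBy0 : ((By : ℝ) : ℂ) ≠ 0 := by
    simpa using ne_of_gt hBy
  have harg : ((By : ℝ) : ℂ).arg ≠ Real.pi := by
    rw [Complex.arg_ofReal_of_nonneg hBy.le]
    exact Ne.symm Real.pi_ne_zero
  have h1 : ((Bx / By : ℝ) : ℂ) ^ s = ((Bx:ℝ):ℂ) ^ s / ((By:ℝ):ℂ) ^ s := by
    rw [div_eq_mul_inv, Complex.ofReal_mul,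
      Complex.mul_cpow_ofReal_nonneg hBx.le (inv_nonneg.mpr hBy.le),
      Complex.ofReal_inv, Complex.inv_cpow _ _ harg, div_eq_mul_inv]
  have h2 : ((By:ℝ):ℂ) ^ ((1:ℂ) - s) = ((By:ℝ):ℂ) / ((By:ℝ):ℂ) ^ s := by
    rw [Complex.cpow_sub _ _ hBy0, Complex.cpow_one]
  have hs0 : ((By:ℝ):ℂ) ^ s ≠ 0 := by
    rw [Complex.cpow_def_of_ne_zero hBy0]
    exact Complex.exp_ne_zero _
  rw [pw, pw, pw, hpk, hbase, hs', ← hBxdef, ← hBydef, ← hsdef, h1, h2,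
    Complex.real_smul]
  field_simp


lemma sub_exp_ne {y : ℂ} (hy : ‖y‖ < 1) (θ : ℝ) :
    y - Complex.exp (Complex.I * θ) ≠ 0 := by
  intro h
  rw [sub_eq_zero] at h
  rw [h, abs_exp_I_mul] at hy
  exact lt_irrefl _ hy

lemma continuous_pker {y : ℂ} (hy : ‖y‖ < 1) : Continuous (pker y) := by
  apply continuous_const.div
  · exact (continuous_norm.comp (continuous_const.sub
      (Complex.continuous_exp.comp (continuous_const.mul Complex.continuous_ofReal)))).pow 2
  · intro θ
    exact pow_ne_zero _ (norm_ne_zero_iff.mpr (sub_exp_ne hy θ))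

lemma hasDerivAt_Hfun {y : ℂ} (hy : ‖y‖ < 1) (θ : ℝ) :
    HasDerivAt (Hfun y) (pker y θ) θ := by
  have h := (((continuous_pker hy).integral_hasStrictDerivAt 0 θ).hasDerivAt).const_add
    ((phi y 1).arg)
  exact h

lemma conj_exp_I_mul (θ : ℝ) :
    (starRingEnd ℂ) (Complex.exp (Complex.I * θ)) = (Complex.exp (Complex.I * θ))⁻¹ := by
  rw [← Complex.exp_conj, ← Complex.exp_neg]
  congr 1
  simp [Complex.conj_ofReal]

lemma pker_complex {y : ℂ} (hy : ‖y‖ < 1) (θ : ℝ) :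
    ((pker y θ : ℝ) : ℂ)
      = (1 - y * (starRingEnd ℂ) y) * Complex.exp (Complex.I * θ)
        / ((Complex.exp (Complex.I * θ) - y)
            * (1 - (starRingEnd ℂ) y * Complex.exp (Complex.I * θ))) := by
  set b := Complex.exp (Complex.I * θ) with hbdef
  have hb : ‖b‖ = 1 := abs_exp_I_mul θ
  have hb0 : b ≠ 0 := Complex.exp_ne_zero _
  have hby : b - y ≠ 0 := by
    intro h; exact sub_exp_ne hy θ (by rw [sub_eq_zero] at h ⊢; exact h.symm)
  have hv : 1 - (starRingEnd ℂ) y * b ≠ 0 := one_sub_conj_mul_ne hy hb.le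
  have hcb : (starRingEnd ℂ) b = b⁻¹ := conj_exp_I_mul θ
  have hyb' : y - b ≠ 0 := by
    intro h; exact hby (by rw [← neg_sub y b, h, neg_zero])
  have hcb' : (starRingEnd ℂ) y - b⁻¹ ≠ 0 := by
    rw [← hcb, ← map_sub]
    intro h
    exact hyb' (by simpa using congrArg (starRingEnd ℂ) h)
  have hbinv : b * b⁻¹ = 1 := mul_inv_cancel₀ hb0
  have e1 : ((‖y - b‖ ^ 2 : ℝ) : ℂ) = (y - b) * ((starRingEnd ℂ) y - b⁻¹) := by
    rw [Complex.sq_norm, ← Complex.mul_conj, map_sub, hcb]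
  have e2 : ((1 - ‖y‖ ^ 2 : ℝ) : ℂ) = 1 - y * (starRingEnd ℂ) y := by
    rw [Complex.ofReal_sub, Complex.ofReal_one, Complex.sq_norm, ← Complex.mul_conj]
  rw [pker, Complex.ofReal_div,
    div_eq_div_iff (by rw [e1]; exact mul_ne_zero hyb' hcb') (mul_ne_zero hby hv), e1, e2]
  linear_combination ((1 - y * (starRingEnd ℂ) y) * (y - b)) * hbinv

lemma hasDerivAt_phiexp {y : ℂ} (hy : ‖y‖ < 1) (θ : ℝ) :
    HasDerivAt (fun t : ℝ => phi y (Complex.exp (Complex.I * t)))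
      (((starRingEnd ℂ) y * y - 1) * (Complex.I * Complex.exp (Complex.I * θ))
        / (1 - (starRingEnd ℂ) y * Complex.exp (Complex.I * θ)) ^ 2) θ := by
  have key : ∀ z : ℂ, ‖Complex.exp (Complex.I * z)‖ = 1 →
      HasDerivAt (fun c : ℂ => phi y (Complex.exp (Complex.I * c)))
        (((starRingEnd ℂ) y * y - 1) * (Complex.I * Complex.exp (Complex.I * z))
          / (1 - (starRingEnd ℂ) y * Complex.exp (Complex.I * z)) ^ 2) z := by
    intro z hz
    have h1 : HasDerivAt (fun c : ℂ => Complex.I * c) Complex.I z := by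
      simpa using (hasDerivAt_id z).const_mul Complex.I
    have h2 : HasDerivAt (fun c : ℂ => Complex.exp (Complex.I * c))
        (Complex.exp (Complex.I * z) * Complex.I) z :=
      (Complex.hasDerivAt_exp (Complex.I * z)).comp z h1
    have hnum : HasDerivAt (fun c : ℂ => y - Complex.exp (Complex.I * c))
        (-(Complex.exp (Complex.I * z) * Complex.I)) z := h2.const_sub y
    have hden : HasDerivAt (fun c : ℂ => 1 - (starRingEnd ℂ) y * Complex.exp (Complex.I * c))
        (-((starRingEnd ℂ) y * (Complex.exp (Complex.I * z) * Complex.I))) z :=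
      (h2.const_mul ((starRingEnd ℂ) y)).const_sub 1
    have hv : 1 - (starRingEnd ℂ) y * Complex.exp (Complex.I * z) ≠ 0 :=
      one_sub_conj_mul_ne hy hz.le
    have := hnum.div hden hv
    refine this.congr_deriv ?_
    rw [div_eq_div_iff (pow_ne_zero 2 hv) (pow_ne_zero 2 hv)]
    ring
  exact (key θ (abs_exp_I_mul θ)).comp_ofReal

lemma exp_I_Hfun {y : ℂ} (hy : ‖y‖ < 1) (θ : ℝ) :
    Complex.exp (Complex.I * (Hfun y θ : ℝ)) = phi y (Complex.exp (Complex.I * θ)) := by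
  set F : ℝ → ℂ := fun t =>
    phi y (Complex.exp (Complex.I * t)) * Complex.exp (-Complex.I * (Hfun y t : ℝ)) with hF
  have hderiv : ∀ t : ℝ, HasDerivAt F 0 t := by
    intro t
    set b := Complex.exp (Complex.I * (t : ℂ)) with hbdef
    have hb : ‖b‖ = 1 := abs_exp_I_mul t
    have hv : 1 - (starRingEnd ℂ) y * b ≠ 0 := one_sub_conj_mul_ne hy hb.le
    have hby : b - y ≠ 0 := by
      intro h; exact sub_exp_ne hy t (by rw [sub_eq_zero] at h ⊢; exact h.symm)
    have hE : HasDerivAt (fun t : ℝ => Complex.exp (-Complex.I * (Hfun y t : ℝ)))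
        (Complex.exp (-Complex.I * (Hfun y t : ℝ)) * (-Complex.I * (pker y t : ℝ))) t :=
      (((hasDerivAt_Hfun hy t).ofReal_comp).const_mul (-Complex.I)).cexp
    have hmul := (hasDerivAt_phiexp hy t).mul hE
    refine hmul.congr_deriv ?_; symm
    rw [pker_complex hy t, ← hbdef, phi]
    field_simp
    ring
  have hconst : ∀ t : ℝ, F t = F 0 := fun t =>
    is_const_of_deriv_eq_zero (fun s => (hderiv s).differentiableAt)
      (fun s => (hderiv s).deriv) t 0
  have habs1 : ‖phi y 1‖ = 1 := abs_phi_eq_one hy (norm_one)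
  have hphi1 : phi y 1 ≠ 0 := norm_ne_zero_iff.mp (by rw [habs1]; norm_num)
  have hH0 : Hfun y 0 = (phi y 1).arg := by simp [Hfun]
  have hexparg : Complex.exp (Complex.I * ((phi y 1).arg : ℝ)) = phi y 1 := by
    have := Complex.norm_mul_exp_arg_mul_I (phi y 1)
    rw [habs1] at this
    rw [mul_comm]
    simpa using this
  have hF0 : F 0 = 1 := by
    rw [hF]
    simp only []
    have h0 : Complex.exp (Complex.I * ((0:ℝ) : ℂ)) = 1 := by norm_num
    rw [h0, hH0]
    rw [neg_mul, Complex.exp_neg, hexparg]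
    exact mul_inv_cancel₀ hphi1
  have ht := (hconst θ).trans hF0
  have hexpne : Complex.exp (-Complex.I * (Hfun y θ : ℝ)) ≠ 0 := Complex.exp_ne_zero _
  have : phi y (Complex.exp (Complex.I * θ))
      = (Complex.exp (-Complex.I * (Hfun y θ : ℝ)))⁻¹ := by
    rw [hF] at ht
    field_simp at ht ⊢
    linear_combination ht
  rw [this, ← Complex.exp_neg]
  ring_nf


lemma poisson {y : ℂ} (hy : ‖y‖ < 1) :
    ∫ θ in (0:ℝ)..(2*Real.pi), pker y θ = 2 * Real.pi := by
  set f₁ : ℂ → ℂ := fun z => (z - y)⁻¹ with hf₁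
  set f₂ : ℂ → ℂ := fun z => (starRingEnd ℂ) y * (1 - (starRingEnd ℂ) y * z)⁻¹ with hf₂
  have hyball : y ∈ Metric.ball (0:ℂ) 1 := by
    simpa [Metric.mem_ball, Complex.dist_eq] using hy
  have hI1 : (∮ z in C(0, 1), f₁ z) = 2 * Real.pi * Complex.I :=
    circleIntegral.integral_sub_inv_of_mem_ball hyball
  have hdiff2 : ∀ z : ℂ, ‖z‖ ≤ 1 → DifferentiableAt ℂ f₂ z := by
    intro z hz
    have hv : 1 - (starRingEnd ℂ) y * z ≠ 0 := one_sub_conj_mul_ne hy hz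
    exact (differentiableAt_const _).mul
      (((differentiableAt_const _).sub ((differentiableAt_id).const_mul _)).inv hv)
  have hI2 : (∮ z in C(0, 1), f₂ z) = 0 := by
    apply Complex.circleIntegral_eq_zero_of_differentiable_on_off_countable zero_le_one
      Set.countable_empty
    · intro z hz
      rw [Metric.mem_closedBall, Complex.dist_eq, sub_zero] at hz
      exact (hdiff2 z hz).continuousAt.continuousWithinAt
    · intro z hz
      rw [Set.diff_empty, Metric.mem_ball, Complex.dist_eq, sub_zero] at hz
      exact hdiff2 z hz.le
  have hcm : ∀ θ : ℝ, circleMap 0 1 θ = Complex.exp (Complex.I * θ) := by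
    intro θ; rw [circleMap_zero]; push_cast; rw [one_mul, mul_comm]
  have habscm : ∀ θ : ℝ, ‖circleMap 0 1 θ‖ = 1 := by
    intro θ; rw [hcm]; exact abs_exp_I_mul θ
  have hne1 : ∀ θ : ℝ, circleMap 0 1 θ - y ≠ 0 := by
    intro θ h
    rw [hcm θ, sub_eq_zero] at h
    exact sub_exp_ne hy θ (by rw [h, sub_self])
  have hne2 : ∀ θ : ℝ, 1 - (starRingEnd ℂ) y * circleMap 0 1 θ ≠ 0 := fun θ =>
    one_sub_conj_mul_ne hy (habscm θ).le
  have hpt : ∀ θ : ℝ, deriv (circleMap 0 1) θ • f₁ (circleMap 0 1 θ)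
      + deriv (circleMap 0 1) θ • f₂ (circleMap 0 1 θ)
      = Complex.I * ((pker y θ : ℝ) : ℂ) := by
    intro θ
    have h1 : Complex.exp (Complex.I * θ) - y ≠ 0 := by rw [← hcm θ]; exact hne1 θ
    have h2 : 1 - (starRingEnd ℂ) y * Complex.exp (Complex.I * θ) ≠ 0 := by
      rw [← hcm θ]; exact hne2 θ
    simp only [deriv_circleMap, smul_eq_mul, hf₁, hf₂, hcm θ]
    rw [pker_complex hy θ]
    have h2' : 1 - Complex.exp (Complex.I * θ) * (starRingEnd ℂ) y ≠ 0 := by rwa [mul_comm]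
    field_simp
    ring
  have hu : Continuous (fun θ : ℝ => deriv (circleMap 0 1) θ • f₁ (circleMap 0 1 θ)) := by
    simp only [deriv_circleMap, smul_eq_mul, hf₁]
    exact (((continuous_circleMap 0 1).mul continuous_const).mul
      (((continuous_circleMap 0 1).sub continuous_const).inv₀ hne1))
  have hv : Continuous (fun θ : ℝ => deriv (circleMap 0 1) θ • f₂ (circleMap 0 1 θ)) := by
    simp only [deriv_circleMap, smul_eq_mul, hf₂]
    exact ((continuous_circleMap 0 1).mul continuous_const).mul
      (continuous_const.mul ((continuous_const.sub
        (continuous_const.mul (continuous_circleMap 0 1))).inv₀ hne2))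
  have hsplit : (∫ θ in (0:ℝ)..(2*Real.pi),
        (deriv (circleMap 0 1) θ • f₁ (circleMap 0 1 θ)
          + deriv (circleMap 0 1) θ • f₂ (circleMap 0 1 θ)))
      = (∮ z in C(0, 1), f₁ z) + (∮ z in C(0, 1), f₂ z) := by
    rw [intervalIntegral.integral_add (hu.intervalIntegrable _ _) (hv.intervalIntegrable _ _)]
    rfl
  have hmain : (Complex.I : ℂ) * ((∫ θ in (0:ℝ)..(2*Real.pi), pker y θ : ℝ) : ℂ)
      = Complex.I * (2 * Real.pi) := by
    calc (Complex.I : ℂ) * ((∫ θ in (0:ℝ)..(2*Real.pi), pker y θ : ℝ) : ℂ)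
        = ∫ θ in (0:ℝ)..(2*Real.pi), Complex.I * ((pker y θ : ℝ) : ℂ) := by
          rw [← intervalIntegral.integral_ofReal, ← intervalIntegral.integral_const_mul]
      _ = ∫ θ in (0:ℝ)..(2*Real.pi),
            (deriv (circleMap 0 1) θ • f₁ (circleMap 0 1 θ)
              + deriv (circleMap 0 1) θ • f₂ (circleMap 0 1 θ)) := by
          refine intervalIntegral.integral_congr fun θ _ => ?_
          exact (hpt θ).symm
      _ = 2 * Real.pi * Complex.I + 0 := by rw [hsplit, hI1, hI2]
      _ = Complex.I * (2 * Real.pi) := by ring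
  have := mul_left_cancel₀ Complex.I_ne_zero hmain
  exact_mod_cast this

/-- The first identity of Lemma 8:
`(1/(2π)) ∫₀^{2π} e_{λ,e^{iθ}}(x)·e_{-λ,e^{iθ}}(y) dθ = Φ_λ(φ_y(x))`. -/
theorem stmt8 (x : ℂ) (hx : x ∈ Disc) (y : ℂ) (hy : y ∈ Disc) (lam : ℝ) :
    (1 / (2 * Real.pi) : ℝ) •
        ∫ θ in (0:ℝ)..(2 * Real.pi),
          pw lam (Complex.exp (Complex.I * (θ : ℂ))) x *
            pw (-lam) (Complex.exp (Complex.I * (θ : ℂ))) y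
      = sphFn lam (phi y x) := by
  have hx' : ‖x‖ < 1 := hx
  have hy' : ‖y‖ < 1 := hy
  have hz : ‖phi y x‖ < 1 := abs_phi_lt_one hy' hx'
  set g : ℝ → ℂ := fun u => pw lam (Complex.exp (Complex.I * (u : ℂ))) (phi y x) with hg
  have hgc : Continuous g := by
    rw [hg]
    simp only [pw]
    rw [continuous_iff_continuousAt]
    intro u
    have hb : ‖Complex.exp (Complex.I * (u:ℂ))‖ = 1 := abs_exp_I_mul u
    have hbase : 0 < (1 - ‖phi y x‖ ^ 2)
        / ‖phi y x - Complex.exp (Complex.I * (u:ℂ))‖ ^ 2 := base_pos hz hb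
    have hinner : Continuous (fun t : ℝ =>
        (((1 - ‖phi y x‖ ^ 2)
          / ‖phi y x - Complex.exp (Complex.I * (t:ℂ))‖ ^ 2 : ℝ) : ℂ)) := by
      apply Complex.continuous_ofReal.comp
      apply continuous_const.div
      · exact (continuous_norm.comp (continuous_const.sub
          (Complex.continuous_exp.comp (continuous_const.mul Complex.continuous_ofReal)))).pow 2
      · intro t
        have h2 : phi y x - Complex.exp (Complex.I * (t:ℂ)) ≠ 0 := by
          intro h
          rw [sub_eq_zero] at h
          rw [h, abs_exp_I_mul] at hz
          exact lt_irrefl _ hz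
        exact pow_ne_zero _ (norm_ne_zero_iff.mpr h2)
    exact hinner.continuousAt.cpow continuousAt_const
      (Complex.ofReal_mem_slitPlane.mpr hbase)
  have hexp2pi : ∀ u : ℝ, Complex.exp (Complex.I * ((u + 2*Real.pi : ℝ) : ℂ))
      = Complex.exp (Complex.I * (u:ℂ)) := by
    intro u
    rw [show Complex.I * ((u + 2*Real.pi : ℝ) : ℂ)
        = Complex.I * (u:ℂ) + 2*(Real.pi:ℂ)*Complex.I by push_cast; ring,
      Complex.exp_add, Complex.exp_two_pi_mul_I, mul_one]
  have hper : Function.Periodic g (2 * Real.pi) := by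
    intro u
    rw [hg]
    simp only []
    rw [hexp2pi u]
  have step1 : (∫ θ in (0:ℝ)..(2 * Real.pi),
        pw lam (Complex.exp (Complex.I * (θ : ℂ))) x *
          pw (-lam) (Complex.exp (Complex.I * (θ : ℂ))) y)
      = ∫ θ in (0:ℝ)..(2 * Real.pi), pker y θ • g (Hfun y θ) := by
    refine intervalIntegral.integral_congr fun θ _ => ?_
    rw [pw_mul_pw hx' hy' lam θ]
    show _ = pker y θ • pw lam (Complex.exp (Complex.I * ((Hfun y θ : ℝ) : ℂ))) (phi y x)
    rw [exp_I_Hfun hy' θ]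
  have step2 : (∫ θ in (0:ℝ)..(2 * Real.pi), pker y θ • g (Hfun y θ))
      = ∫ u in (Hfun y 0)..(Hfun y (2 * Real.pi)), g u := by
    have h := intervalIntegral.integral_comp_smul_deriv
      (f := Hfun y) (f' := pker y) (g := g) (a := 0) (b := 2 * Real.pi)
      (fun θ _ => hasDerivAt_Hfun hy' θ) (continuous_pker hy').continuousOn hgc
    simpa [Function.comp] using h
  have hH2 : Hfun y (2 * Real.pi) = Hfun y 0 + 2 * Real.pi := by
    simp [Hfun, poisson hy']
  have step3 : (∫ u in (Hfun y 0)..(Hfun y (2 * Real.pi)), g u)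
      = ∫ u in (0:ℝ)..(2 * Real.pi), g u := by
    rw [hH2]
    have h := hper.intervalIntegral_add_eq (Hfun y 0) 0
    simpa using h
  rw [step1, step2, step3]
  rfl
end

section
/- For all x, y ∈ 𝔻 and λ ∈ ℝ, Φ_λ(φ_x(y)) = Φ_λ(φ_y(x)). -/
open MeasureTheory

lemma pw_rot (lam : ℝ) (b c z : ℂ) (hc : ‖c‖ = 1) :
    pw lam b (c * z) = pw lam ((starRingEnd ℂ) c * b) z := by
  have h1 : c * (starRingEnd ℂ) c = 1 := by
    rw [Complex.mul_conj]
    norm_cast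
    rw [Complex.normSq_eq_norm_sq, hc]; norm_num
  unfold pw
  congr 3
  · rw [norm_mul, hc, one_mul]
  · have h2 : c * z - b = c * (z - (starRingEnd ℂ) c * b) := by
      rw [mul_sub, ← mul_assoc, h1, one_mul]
    rw [h2, norm_mul, hc, one_mul]

lemma sphFn_rot (lam : ℝ) (c z : ℂ) (hc : ‖c‖ = 1) :
    sphFn lam (c * z) = sphFn lam z := by
  obtain ⟨α, hα⟩ : ∃ α : ℝ, Complex.exp ((α : ℂ) * Complex.I) = c :=
    ⟨c.arg, by simpa [hc] using Complex.norm_mul_exp_arg_mul_I c⟩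
  unfold sphFn
  congr 1
  have key : ∀ θ : ℝ, pw lam (Complex.exp (Complex.I * (θ : ℂ))) (c * z)
      = pw lam (Complex.exp (Complex.I * ((θ - α : ℝ) : ℂ))) z := by
    intro θ
    rw [pw_rot lam _ c z hc]
    congr 1
    rw [← hα, ← Complex.exp_conj, ← Complex.exp_add]
    congr 1
    push_cast
    simp [Complex.conj_I]
    ring
  simp_rw [key]
  rw [intervalIntegral.integral_comp_sub_right
    (fun θ : ℝ => pw lam (Complex.exp (Complex.I * (θ : ℂ))) z) α]
  have hper : Function.Periodic
      (fun θ : ℝ => pw lam (Complex.exp (Complex.I * (θ : ℂ))) z) (2 * Real.pi) := by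
    intro θ
    simp only
    have h2 : Complex.exp (Complex.I * ((θ + 2 * Real.pi : ℝ) : ℂ))
        = Complex.exp (Complex.I * (θ : ℂ)) := by
      push_cast
      rw [mul_add, Complex.exp_add]
      have h3 : Complex.exp (Complex.I * (2 * Real.pi)) = 1 := by
        rw [mul_comm]
        simp [Complex.exp_two_pi_mul_I]
      rw [h3, mul_one]
    rw [h2]
  have h := hper.intervalIntegral_add_eq (0 - α) 0
  rw [show (0:ℝ) - α + 2 * Real.pi = 2 * Real.pi - α by ring,
    zero_add] at h
  simpa using h

/-- The second identity of Lemma 8: `Φ_λ(φ_x(y)) = Φ_λ(φ_y(x))`. -/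
theorem stmt9 (x : ℂ) (hx : x ∈ Disc) (y : ℂ) (hy : y ∈ Disc) (lam : ℝ) :
    sphFn lam (phi x y) = sphFn lam (phi y x) := by
  have hx' : ‖x‖ < 1 := hx
  have hy' : ‖y‖ < 1 := hy
  have habslt : ‖(starRingEnd ℂ) x * y‖ < 1 := by
    rw [norm_mul, Complex.norm_conj]
    nlinarith [norm_nonneg x, norm_nonneg y]
  have hne : (1 : ℂ) - (starRingEnd ℂ) x * y ≠ 0 := by
    intro h
    have h1 : (starRingEnd ℂ) x * y = 1 := by linear_combination -h
    rw [h1] at habslt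
    simp at habslt
  have hconj : (starRingEnd ℂ) ((1 : ℂ) - (starRingEnd ℂ) x * y)
      = 1 - (starRingEnd ℂ) y * x := by
    rw [map_sub, map_one, map_mul, Complex.conj_conj]
    ring
  have hne' : (1 : ℂ) - (starRingEnd ℂ) y * x ≠ 0 := by
    rw [← hconj, starRingEnd_apply, star_ne_zero]
    exact hne
  set c : ℂ := -((1 - (starRingEnd ℂ) x * y) / (1 - (starRingEnd ℂ) y * x)) with hcdef
  have habs : ‖c‖ = 1 := by
    rw [hcdef, norm_neg, norm_div, ← hconj, Complex.norm_conj]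
    exact div_self (norm_ne_zero_iff.mpr hne)
  have hrel : phi y x = c * phi x y := by
    unfold phi
    rw [hcdef]
    rw [neg_mul, div_mul_div_comm, mul_comm (1 - (starRingEnd ℂ) x * y) (x - y),
      mul_div_mul_right _ _ hne, ← neg_div, neg_sub]
  rw [hrel, sphFn_rot lam c _ habs]
end

section
/- For every pair x, y ∈ 𝔻 there exists exactly one point m ∈ 𝔻 such that φ_m(x) = −φ_m(y). -/
lemma normSq_lt_one_of_mem {z : ℂ} (hz : z ∈ Disc) : Complex.normSq z < 1 := by
  have h : ‖z‖ < 1 := hz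
  have h2 := Complex.sq_norm z
  nlinarith [norm_nonneg z]

lemma mem_of_normSq_lt_one {z : ℂ} (hz : Complex.normSq z < 1) : z ∈ Disc := by
  have h2 := Complex.sq_norm z
  have h0 := norm_nonneg z
  show ‖z‖ < 1
  nlinarith

lemma denom_ne {m z : ℂ} (hm : m ∈ Disc) (hz : z ∈ Disc) :
    (1 : ℂ) - (starRingEnd ℂ) m * z ≠ 0 := by
  intro h
  have h1 : (starRingEnd ℂ) m * z = 1 := by linear_combination -h
  have h2 := congrArg norm h1
  rw [norm_mul, Complex.norm_conj, norm_one] at h2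
  have hm' : ‖m‖ < 1 := hm
  have hz' : ‖z‖ < 1 := hz
  nlinarith [norm_nonneg m, norm_nonneg z]

lemma phi_iff {x y m : ℂ} (hx : x ∈ Disc) (hy : y ∈ Disc) (hm : m ∈ Disc) :
    (phi m x = -(phi m y)) ↔
      2*m + 2*(starRingEnd ℂ) m * (x*y) = (x+y)*(1 + (Complex.normSq m : ℂ)) := by
  have h1 := denom_ne hm hx
  have h2 := denom_ne hm hy
  have hmc : m * (starRingEnd ℂ) m = (Complex.normSq m : ℂ) := Complex.mul_conj m
  rw [phi, phi, ← neg_div, div_eq_div_iff h1 h2]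
  constructor
  · intro h
    linear_combination h + (x+y)*hmc
  · intro h
    linear_combination h - (x+y)*hmc

lemma runiq {k r r' : ℝ} (hr : 0 ≤ r) (hr1 : r < 1) (hr' : 0 ≤ r') (hr1' : r' < 1)
    (h : k*(1+r)^2 = 4*r) (h' : k*(1+r')^2 = 4*r') : r = r' := by
  have h2 : (r - r')*(1 - r*r') = 0 := by
    have h3 : 4*r*(1+r')^2 = 4*r'*(1+r)^2 := by
      linear_combination (1+r)^2 * h' - (1+r')^2 * h
    linear_combination h3/4
  rcases mul_eq_zero.mp h2 with h4 | h4
  · linarith [sub_eq_zero.mp h4]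
  · nlinarith

/-- Existence and uniqueness of the geodesic midpoint: for every pair
`x, y` in the unit disc there is exactly one `m` in the disc with `φ_m(x) = -φ_m(y)`. -/
theorem stmt10 (x : ℂ) (hx : x ∈ Disc) (y : ℂ) (hy : y ∈ Disc) :
    ∃! m : ℂ, m ∈ Disc ∧ phi m x = -(phi m y) := by
  have hx2 := normSq_lt_one_of_mem hx
  have hy2 := normSq_lt_one_of_mem hy
  set a2 := Complex.normSq x with ha2
  set b2 := Complex.normSq y with hb2
  have ha0 : 0 ≤ a2 := Complex.normSq_nonneg x
  have hb0 : 0 ≤ b2 := Complex.normSq_nonneg y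
  have hd : (0:ℝ) < 1 - a2*b2 := by nlinarith
  set N : ℂ := x*(1-(b2:ℂ)) + y*(1-(a2:ℂ)) with hN
  set w : ℂ := N / ((1 - a2*b2 : ℝ):ℂ) with hw
  have hdc : ((1 - a2*b2 : ℝ):ℂ) ≠ 0 := by
    exact_mod_cast hd.ne'
  have hxc : x * (starRingEnd ℂ) x = (a2:ℂ) := Complex.mul_conj x
  have hyc : y * (starRingEnd ℂ) y = (b2:ℂ) := Complex.mul_conj y
  -- |w| < 1
  have hwlt : ‖w‖ < 1 := by
    rw [hw, norm_div, Complex.norm_real, Real.norm_eq_abs, abs_of_pos hd, div_lt_one hd]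
    have hA : ‖x‖ ^ 2 = a2 := by rw [ha2]; exact Complex.sq_norm x
    have hB : ‖y‖ ^ 2 = b2 := by rw [hb2]; exact Complex.sq_norm y
    have hAx : ‖x‖ < 1 := hx
    have hBy : ‖y‖ < 1 := hy
    have h0x := norm_nonneg x
    have h0y := norm_nonneg y
    have htri : ‖N‖ ≤ ‖x‖ * (1-b2) + ‖y‖ * (1-a2) := by
      calc ‖N‖ ≤ ‖x*(1-(b2:ℂ))‖ + ‖y*(1-(a2:ℂ))‖ :=
            norm_add_le _ _
        _ = ‖x‖ * (1-b2) + ‖y‖ * (1-a2) := by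
            rw [norm_mul, norm_mul]
            have e1 : (1:ℂ) - (b2:ℂ) = ((1-b2:ℝ):ℂ) := by push_cast; ring
            have e2 : (1:ℂ) - (a2:ℂ) = ((1-a2:ℝ):ℂ) := by push_cast; ring
            rw [e1, e2, Complex.norm_real, Complex.norm_real, Real.norm_eq_abs, Real.norm_eq_abs,
              abs_of_nonneg (by nlinarith : (0:ℝ) ≤ 1-b2),
              abs_of_nonneg (by nlinarith : (0:ℝ) ≤ 1-a2)]
    have hfac : (0:ℝ) < (1 - ‖x‖ * ‖y‖) *
        ((1 - ‖x‖) * (1 - ‖y‖)) := by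
      apply mul_pos
      · nlinarith
      · apply mul_pos <;> linarith
    nlinarith [htri, hfac, hA, hB]
  set k := Complex.normSq w with hk
  have hk0 : 0 ≤ k := Complex.normSq_nonneg w
  have hk1 : k < 1 := normSq_lt_one_of_mem hwlt
  set u := Real.sqrt (1-k) with hu
  have hu2 : u^2 = 1-k := Real.sq_sqrt (by linarith)
  have hu0 : 0 < u := Real.sqrt_pos.mpr (by linarith)
  have hu1 : u ≤ 1 := by nlinarith
  set r := (1-u)/(1+u) with hr
  have h1u : (1:ℝ)+u ≠ 0 := by positivity
  have hr0 : 0 ≤ r := div_nonneg (by linarith) (by linarith)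
  have hr1 : r < 1 := (div_lt_one (by linarith)).mpr (by linarith)
  have h3r : (1+u)*(1+r) = 2 := by rw [hr]; field_simp; norm_num
  have h2r : (1+u)*r = 1-u := by rw [hr]; field_simp
  have hkey : k*(1+r)^2 = 4*r := by
    have e : (1+u)^2 * (k*(1+r)^2) = (1+u)^2 * (4*r) := by
      linear_combination k*((1+u)*(1+r)+2)*h3r - 4*(1+u)*h2r + 4*hu2
    exact mul_left_cancel₀ (pow_ne_zero 2 h1u) e
  -- key conjugation identity
  have hconjw : (starRingEnd ℂ) w =
      ((starRingEnd ℂ) x*(1-(b2:ℂ)) + (starRingEnd ℂ) y*(1-(a2:ℂ))) / ((1 - a2*b2 : ℝ):ℂ) := by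
    rw [hw, map_div₀, Complex.conj_ofReal]
    congr 1
    rw [hN]
    simp [map_add, map_mul, map_sub, map_one, Complex.conj_ofReal]
  have hA : w + (x*y) * (starRingEnd ℂ) w = x + y := by
    rw [hw, hconjw, ← mul_div_assoc, ← add_div, div_eq_iff hdc, hN]
    push_cast
    linear_combination y*(1-(b2:ℂ))*hxc + x*(1-(a2:ℂ))*hyc
  -- the midpoint
  set m0 : ℂ := (((1+r)/2 : ℝ):ℂ) * w with hm0
  have hconjm0 : (starRingEnd ℂ) m0 = (((1+r)/2 : ℝ):ℂ) * (starRingEnd ℂ) w := by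
    rw [hm0, map_mul, Complex.conj_ofReal]
  have hm0sq : Complex.normSq m0 = r := by
    rw [hm0, Complex.normSq_mul, Complex.normSq_ofReal, ← hk]
    linear_combination hkey/4
  have hm0d : m0 ∈ Disc := mem_of_normSq_lt_one (by rw [hm0sq]; exact hr1)
  have hE0 : 2*m0 + 2*(starRingEnd ℂ) m0 * (x*y) = (x+y)*(1 + (Complex.normSq m0 : ℂ)) := by
    rw [hconjm0, hm0, hm0sq]
    push_cast
    linear_combination (1+(r:ℂ))*hA
  refine ⟨m0, ⟨hm0d, (phi_iff hx hy hm0d).mpr hE0⟩, ?_⟩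
  rintro m ⟨hmD, hmphi⟩
  have hE := (phi_iff hx hy hmD).mp hmphi
  set rr := Complex.normSq m with hrr
  have hrr0 : 0 ≤ rr := Complex.normSq_nonneg m
  have hrr1 : rr < 1 := normSq_lt_one_of_mem hmD
  have hCE : 2*(starRingEnd ℂ) m + 2*m * (starRingEnd ℂ) (x*y)
      = ((starRingEnd ℂ) x + (starRingEnd ℂ) y)*(1 + (rr:ℂ)) := by
    have h6 := congrArg (starRingEnd ℂ) hE
    simpa [map_add, map_mul, map_ofNat, Complex.conj_ofReal] using h6
  have hpc : (x*y) * (starRingEnd ℂ) (x*y) = (a2:ℂ)*(b2:ℂ) := by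
    rw [Complex.mul_conj, Complex.normSq_mul]
    push_cast
    rw [ha2, hb2]
  have hNs : (x+y) - (x*y)*((starRingEnd ℂ) x + (starRingEnd ℂ) y) = N := by
    rw [hN]
    linear_combination -y*hxc - x*hyc
  have hlin : 2*m*((1:ℂ) - (a2:ℂ)*(b2:ℂ)) = N*(1+(rr:ℂ)) := by
    linear_combination hE - (x*y)*hCE + 2*m*hpc + (1+(rr:ℂ))*hNs
  have hm : m = (((1+rr)/2 : ℝ):ℂ) * w := by
    rw [hw, ← mul_div_assoc, eq_div_iff hdc]
    push_cast
    linear_combination hlin/2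
  have h5 := congrArg Complex.normSq hm
  rw [Complex.normSq_mul, Complex.normSq_ofReal, ← hk, ← hrr] at h5
  have hmsq : k*(1+rr)^2 = 4*rr := by linear_combination -4*h5
  have hreq : rr = r := runiq hrr0 hrr1 hr0 hr1 hmsq hkey
  rw [hm, hreq, hm0]
end
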